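/- arXiv:2209.08462 — 4 statements merged into one kernel-verified Lean document; each statement's English description precedes it below -/
import Mathlib

section
/- If L¹, L² are a pair of mutually weak orthogonal Latin squares of order d₁ and K¹, K² are a pair of mutually weak orthogonal Latin squares of order d₂, then the product squares M^m of order d₁d₂ defined on index pairs by M^m((i,s),(j,t)) = (L^m(i,j), K^m(s,t)) for m = 1,2 are Latin squares and are mutually weak orthogonal. -/
/-- A square array (rows/columns indexed by `ι`, symbols in `σ`) is a Latin square if
every row and every column is a bijection onto the symbol set. -/
def IsLatin {ι σ : Type*} (L : ι → ι → σ) : Prop :=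
  (∀ i, Function.Bijective fun j => L i j) ∧ (∀ j, Function.Bijective fun i => L i j)

/-- Two squares are mutually weak orthogonal if any two rows agree in exactly one column. -/
def WeakOrth {ι σ : Type*} (L K : ι → ι → σ) : Prop :=
  ∀ i j, ∃! s, L i s = K j s

lemma prod_bij {α β γ δ : Type*} {f : α → γ} {g : β → δ}
    (hf : Function.Bijective f) (hg : Function.Bijective g) :
    Function.Bijective fun p : α × β => (f p.1, g p.2) := by
  constructor
  · rintro ⟨a, b⟩ ⟨a', b'⟩ h
    simp only [Prod.mk.injEq] at h
    exact Prod.ext (hf.1 h.1) (hg.1 h.2)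
  · rintro ⟨c, d⟩
    obtain ⟨a, ha⟩ := hf.2 c
    obtain ⟨b, hb⟩ := hg.2 d
    exact ⟨(a, b), by simp [ha, hb]⟩

/-- The direct products of a pair of MWOLS of order `d₁` with a pair of
MWOLS of order `d₂` are Latin squares of order `d₁d₂` that are mutually weak orthogonal. -/
theorem product_mwols {d₁ d₂ : ℕ}
    (L₁ L₂ : Fin d₁ → Fin d₁ → Fin d₁) (K₁ K₂ : Fin d₂ → Fin d₂ → Fin d₂)
    (hL₁ : IsLatin L₁) (hL₂ : IsLatin L₂) (hK₁ : IsLatin K₁) (hK₂ : IsLatin K₂)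
    (hLw : WeakOrth L₁ L₂) (hKw : WeakOrth K₁ K₂) :
    IsLatin (fun (p q : Fin d₁ × Fin d₂) => (L₁ p.1 q.1, K₁ p.2 q.2)) ∧
    IsLatin (fun (p q : Fin d₁ × Fin d₂) => (L₂ p.1 q.1, K₂ p.2 q.2)) ∧
    WeakOrth (fun (p q : Fin d₁ × Fin d₂) => (L₁ p.1 q.1, K₁ p.2 q.2))
      (fun (p q : Fin d₁ × Fin d₂) => (L₂ p.1 q.1, K₂ p.2 q.2)) := by
  refine ⟨⟨fun p => prod_bij (hL₁.1 p.1) (hK₁.1 p.2),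
          fun q => prod_bij (hL₁.2 q.1) (hK₁.2 q.2)⟩,
         ⟨fun p => prod_bij (hL₂.1 p.1) (hK₂.1 p.2),
          fun q => prod_bij (hL₂.2 q.1) (hK₂.2 q.2)⟩,
         ?_⟩
  rintro ⟨i, s⟩ ⟨j, t⟩
  obtain ⟨a, ha, ha'⟩ := hLw i j
  obtain ⟨b, hb, hb'⟩ := hKw s t
  refine ⟨(a, b), by simp [ha, hb], ?_⟩
  rintro ⟨x, y⟩ h
  simp only [Prod.mk.injEq] at h
  exact Prod.ext (ha' x h.1) (hb' y h.2)
end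

section
/- Let L¹ be a Latin square of order d whose cells can be partitioned into d disjoint transversals. Define L² to be the d×d square whose k-th row is the transversal containing the cell (k,0) of L¹, listed by column (i.e., L²(k,j) = L¹(i_j, j) where the cells (i_j, j), j = 0,…,d−1, form the transversal through (k,0)). Then L² is a Latin square, and L¹ and L² are mutually weak orthogonal. -/
/-- If a Latin square `L` of order `d` (with `L(i,0) = i`) has a resolution
into `d` disjoint transversals, encoded by `T` where the `k`-th transversal consists of
the cells `(T k j, j)` and passes through `(k,0)`, then the square
`L²(k,j) = L(T k j, j)` is a Latin square and `L, L²` are mutually weak orthogonal. -/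
theorem weak_orth_of_transversal_resolution {d : ℕ} [NeZero d]
    (L : Fin d → Fin d → Fin d) (hL : IsLatin L) (h0 : ∀ i, L i 0 = i)
    (T : Fin d → Fin d → Fin d)
    (hTrow : ∀ k, Function.Bijective (T k))
    (hTsym : ∀ k, Function.Bijective fun j => L (T k j) j)
    (hTpart : ∀ j, Function.Bijective fun k => T k j)
    (hT0 : ∀ k, T k 0 = k) :
    IsLatin (fun k j => L (T k j) j) ∧ WeakOrth L (fun k j => L (T k j) j) := by
  constructor
  · constructor
    · exact hTsym
    · intro j
      exact (hL.2 j).comp (hTpart j)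
  · intro i j
    obtain ⟨s, hs⟩ := (hTrow j).2 i
    refine ⟨s, ?_, ?_⟩
    · simp [hs]
    · intro t ht
      have : i = T j t := (hL.2 t).1 ht
      exact (hTrow j).1 (this ▸ hs.symm)
end

section
/- Let d ≥ 1, ω = exp(2πi/d), and let L be a Latin square of order d on Z_d. For n, m ∈ Z_d and l ∈ Z_d, define the unit vectors in C^d ⊗ C^d ⊗ C^d by |φ_{n,m,l}⟩ = (1/d) Σ_{k∈Z_d} ω^{nk} |k⟩ ⊗ Σ_{i∈Z_d} ω^{mi} |i⟩ ⊗ |j(i, k+l)⟩, where j(i,s) is the unique column such that L(i, j(i,s)) = s. Then the d³ vectors {|φ_{n,m,l}⟩ : n,m,l ∈ Z_d} form an orthonormal basis of C^d ⊗ C^d ⊗ C^d. -/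
open Complex

/-- The AMEB vector `|φ_{n,m,l}⟩` built from a Latin square `L` on `Z_d`:
its component at the standard basis vector `|k⟩⊗|i⟩⊗|j⟩` is
`(1/d)·ω^{nk}·ω^{mi}·[L(i,j) = k+l]`, i.e. the third factor is `|j(i,k+l)⟩`. -/
noncomputable def phiVec (d : ℕ) [NeZero d] (L : ZMod d → ZMod d → ZMod d)
    (nml : ZMod d × ZMod d × ZMod d) : EuclideanSpace ℂ (ZMod d × ZMod d × ZMod d) :=
  WithLp.toLp 2 fun kij =>
    (d : ℂ)⁻¹ * Complex.exp (2 * Real.pi * Complex.I / d) ^ (nml.1.val * kij.1.val) *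
      Complex.exp (2 * Real.pi * Complex.I / d) ^ (nml.2.1.val * kij.2.1.val) *
      (if L kij.2.1 kij.2.2 = kij.1 + nml.2.2 then 1 else 0)

lemma sum_zmod_pow_val (d : ℕ) [NeZero d] (z : ℂ) (hz : z ^ d = 1) :
    ∑ k : ZMod d, z ^ (k.val) = if z = 1 then (d : ℂ) else 0 := by
  have h : ∑ k : ZMod d, z ^ (k.val) = ∑ k ∈ Finset.range d, z ^ k := by
    refine Finset.sum_nbij' (fun k => k.val) (fun k => (k : ZMod d)) ?_ ?_ ?_ ?_ ?_
    · intro a _; exact Finset.mem_range.2 (ZMod.val_lt a)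
    · intro a _; exact Finset.mem_univ _
    · intro a _; exact ZMod.natCast_rightInverse a
    · intro a ha; exact ZMod.val_cast_of_lt (Finset.mem_range.1 ha)
    · intro a _; rfl
  rw [h]
  by_cases h1 : z = 1
  · simp [h1]
  · rw [if_neg h1, geom_sum_eq h1, hz, sub_self, zero_div]

lemma row_sum_ite (d : ℕ) [NeZero d] (L : ZMod d → ZMod d → ZMod d)
    (hrow : ∀ i, Function.Bijective (L i)) (i : ZMod d) (c : ZMod d) :
    ∑ j : ZMod d, (if L i j = c then (1 : ℂ) else 0) = 1 := by
  rw [Fintype.sum_bijective (L i) (hrow i) _ (fun s => if s = c then (1 : ℂ) else 0)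
    (fun j => rfl)]
  simp

/-- For a Latin square `L` of order `d ≥ 1` on `Z_d`, the `d³` vectors
`|φ_{n,m,l}⟩` form an orthonormal basis of `C^d ⊗ C^d ⊗ C^d`. -/
theorem phiVec_orthonormal_basis (d : ℕ) [NeZero d] (L : ZMod d → ZMod d → ZMod d)
    (hrow : ∀ i, Function.Bijective (L i))
    (hcol : ∀ j, Function.Bijective fun i => L i j) :
    Orthonormal ℂ (phiVec d L) ∧
      Submodule.span ℂ (Set.range (phiVec d L)) = ⊤ := by
  classical
  set ω : ℂ := Complex.exp (2 * Real.pi * Complex.I / d) with hω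
  have hd0 : (d : ℂ) ≠ 0 := Nat.cast_ne_zero.2 (NeZero.ne d)
  have hprim : IsPrimitiveRoot ω d := Complex.isPrimitiveRoot_exp d (NeZero.ne d)
  have hωd : ω ^ d = 1 := hprim.pow_eq_one
  have hω0 : ω ≠ 0 := by
    intro h; rw [h] at hωd; simp [zero_pow (NeZero.ne d)] at hωd
  have hconj : (starRingEnd ℂ) ω = ω⁻¹ := by
    rw [hω, ← Complex.exp_conj, ← Complex.exp_neg]
    congr 1
    simp only [map_div₀, map_mul, map_ofNat, Complex.conj_ofReal, Complex.conj_I, map_natCast]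
    ring
  -- key lemma: character sum
  have key : ∀ a b : ZMod d,
      ∑ k : ZMod d, ((starRingEnd ℂ) ω ^ a.val * ω ^ b.val) ^ k.val
        = if a = b then (d : ℂ) else 0 := by
    intro a b
    set z : ℂ := (starRingEnd ℂ) ω ^ a.val * ω ^ b.val with hz
    have hzd : z ^ d = 1 := by
      rw [hz, mul_pow, ← pow_mul, ← pow_mul, mul_comm a.val d, mul_comm b.val d,
        pow_mul, pow_mul, hωd, ← map_pow, hωd, map_one, one_pow, one_pow, mul_one]
    have hz1 : z = 1 ↔ a = b := by
      rw [hz, hconj, inv_pow, inv_mul_eq_one₀ (pow_ne_zero _ hω0)]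
      constructor
      · intro h
        exact (ZMod.val_injective d (hprim.pow_inj (ZMod.val_lt a) (ZMod.val_lt b) h))
      · rintro rfl; rfl
    rw [sum_zmod_pow_val d z hzd]
    by_cases hab : a = b
    · rw [if_pos (hz1.2 hab), if_pos hab]
    · rw [if_neg (fun h => hab (hz1.1 h)), if_neg hab]
  have horth : Orthonormal ℂ (phiVec d L) := by
    rw [orthonormal_iff_ite]
    rintro ⟨n, m, l⟩ ⟨n', m', l'⟩
    rw [PiLp.inner_apply]
    simp_rw [RCLike.inner_apply']
    have hterm : ∀ kij : ZMod d × ZMod d × ZMod d,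
        (starRingEnd ℂ) (phiVec d L (n, m, l) kij) * phiVec d L (n', m', l') kij
          = (d : ℂ)⁻¹ * (d : ℂ)⁻¹ *
            (((starRingEnd ℂ) ω ^ n.val * ω ^ n'.val) ^ kij.1.val *
              (((starRingEnd ℂ) ω ^ m.val * ω ^ m'.val) ^ kij.2.1.val *
                ((if L kij.2.1 kij.2.2 = kij.1 + l then (1:ℂ) else 0) *
                  (if L kij.2.1 kij.2.2 = kij.1 + l' then (1:ℂ) else 0)))) := by
      rintro ⟨k, i, j⟩
      simp only [phiVec, WithLp.ofLp_toLp, map_mul, map_pow, map_inv₀, map_natCast]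
      rw [mul_pow, mul_pow, ← pow_mul, ← pow_mul, ← pow_mul, ← pow_mul]
      have : (starRingEnd ℂ) (if L i j = k + l then (1:ℂ) else 0)
          = (if L i j = k + l then (1:ℂ) else 0) := by
        split <;> simp
      rw [this]
      ring
    rw [Finset.sum_congr rfl (fun kij _ => hterm kij)]
    rw [← Finset.mul_sum, Fintype.sum_prod_type]
    simp_rw [← Finset.mul_sum, Fintype.sum_prod_type]
    -- innermost sum over j
    have hj : ∀ (k i : ZMod d),
        ∑ j : ZMod d, ((if L i j = k + l then (1:ℂ) else 0) *
            (if L i j = k + l' then (1:ℂ) else 0))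
          = if l = l' then 1 else 0 := by
      intro k i
      by_cases hll : l = l'
      · subst hll
        rw [if_pos rfl]
        have hsq : ∀ j : ZMod d, (if L i j = k + l then (1:ℂ) else 0) *
            (if L i j = k + l then (1:ℂ) else 0) = (if L i j = k + l then (1:ℂ) else 0) :=
          fun j => by split <;> simp
        rw [Finset.sum_congr rfl fun j _ => hsq j, row_sum_ite d L hrow i (k + l)]
      · rw [if_neg hll]
        refine Finset.sum_eq_zero fun j _ => ?_
        rcases eq_or_ne (L i j) (k + l) with h | h
        · have h2 : L i j ≠ k + l' := fun h' => hll (by rw [h] at h'; exact add_left_cancel h')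
          rw [if_neg h2, mul_zero]
        · rw [if_neg h, zero_mul]
    simp_rw [← Finset.mul_sum, hj, ← Finset.sum_mul, key m m', key n n']
    by_cases hn : n = n' <;> by_cases hm : m = m' <;> by_cases hl : l = l' <;>
      simp [hn, hm, hl, Prod.ext_iff] <;> field_simp
  refine ⟨horth, ?_⟩
  apply LinearIndependent.span_eq_top_of_card_eq_finrank horth.linearIndependent
  simp [finrank_euclideanSpace]
end

section
/- For q a prime power with q ≥ 3, there exist q−1 Latin squares of order q that are simultaneously pairwise mutually orthogonal and pairwise mutually weak orthogonal, namely the squares L_c(i,j) = i + c·j over F_q for c ∈ F_q \ {0}. -/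
/-- For a prime power `q ≥ 3`, the `q−1` squares `L_c(i,j) = i + c·j`
over the field `F` with `q` elements (one for each nonzero `c`) are Latin squares that
are simultaneously pairwise mutually orthogonal and pairwise mutually weak orthogonal. -/
theorem field_squares_mols_and_mwols (q : ℕ) (hq : IsPrimePow q) (hq3 : 3 ≤ q)
    (F : Type*) [Field F] [Fintype F] [DecidableEq F] (hF : Fintype.card F = q) :
    Fintype.card {c : F // c ≠ 0} = q - 1 ∧
    (∀ c : F, c ≠ 0 → IsLatin fun i j : F => i + c * j) ∧
    (∀ c c' : F, c ≠ 0 → c' ≠ 0 → c ≠ c' →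
      (Function.Bijective fun p : F × F => (p.1 + c * p.2, p.1 + c' * p.2)) ∧
      ∀ i i' : F, ∃! j : F, i + c * j = i' + c' * j) := by
  refine ⟨?_, ?_, ?_⟩
  · rw [← hF]
    simp [Fintype.card_subtype_compl]
  · intro c hc
    constructor
    · intro i
      constructor
      · intro a b h
        simp only at h
        have : c * a = c * b := by linear_combination h
        exact mul_left_cancel₀ hc this
      · intro y
        exact ⟨c⁻¹ * (y - i), by field_simp; ring⟩
    · intro j
      constructor
      · intro a b h
        simpa using h
      · intro y
        exact ⟨y - c * j, by ring⟩
  · intro c c' hc hc' hne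
    have hd : c - c' ≠ 0 := sub_ne_zero.mpr hne
    constructor
    · constructor
      · rintro ⟨a, b⟩ ⟨a', b'⟩ h
        simp only [Prod.mk.injEq] at h
        obtain ⟨h1, h2⟩ := h
        have hb : b = b' := by
          have : (c - c') * b = (c - c') * b' := by linear_combination h1 - h2
          exact mul_left_cancel₀ hd this
        have ha : a = a' := by
          subst hb
          linear_combination h1
        simp [ha, hb]
      · rintro ⟨x, y⟩
        refine ⟨(x - c * ((c - c')⁻¹ * (x - y)), (c - c')⁻¹ * (x - y)), ?_⟩
        simp only [Prod.mk.injEq]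
        constructor
        · ring
        · field_simp
          ring
    · intro i i'
      refine ⟨(c - c')⁻¹ * (i' - i), ?_, ?_⟩
      · field_simp
        ring
      · intro j hj
        have : (c - c') * j = i' - i := by linear_combination hj
        field_simp
        linear_combination this
end
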